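/- For every β > 0, the set D_β ∩ {z ∈ ℂ : Re(z) < β/2} is convex, where D_β = {z ∈ ℂ : |z² − βz| < β²/4}. -/

import Mathlib

open Real Set


noncomputable def lemnG (x : ℝ) : ℝ := Real.sqrt (4*x^2+1) - 1 - x^2
noncomputable def lemnH (x : ℝ) : ℝ := Real.sqrt (lemnG x)
noncomputable def lemnPhi (x : ℝ) : ℝ :=
  (4*x / Real.sqrt (4*x^2+1) - 2*x) / (2 * Real.sqrt (lemnG x))

lemma sqrt_pos' (x : ℝ) : 0 < Real.sqrt (4*x^2+1) := Real.sqrt_pos.2 (by positivity)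
lemma sq_s (x : ℝ) : (Real.sqrt (4*x^2+1))^2 = 4*x^2+1 := Real.sq_sqrt (by positivity)

lemma hasDerivAt_s (x : ℝ) : HasDerivAt (fun x => Real.sqrt (4*x^2+1))
    (4*x / Real.sqrt (4*x^2+1)) x := by
  have h1 : HasDerivAt (fun x : ℝ => 4*x^2+1) (4*(2*x)) x := by
    simpa [mul_assoc] using ((hasDerivAt_pow 2 x).const_mul 4).add_const 1
  have h2 := (Real.hasDerivAt_sqrt (by positivity : (4*x^2+1 : ℝ) ≠ 0)).comp x h1
  refine h2.congr_deriv ?_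
  field_simp

lemma hasDerivAt_g (x : ℝ) : HasDerivAt lemnG (4*x / Real.sqrt (4*x^2+1) - 2*x) x := by
  have := ((hasDerivAt_s x).sub_const 1).sub
    (by simpa using (hasDerivAt_pow 2 x) : HasDerivAt (fun x : ℝ => x^2) (2*x) x)
  exact this

lemma g_pos {x : ℝ} (hx : x ∈ Ioo (-Real.sqrt 2) 0) : 0 < lemnG x := by
  obtain ⟨h1, h2⟩ := hx
  have hs2 : (Real.sqrt 2)^2 = 2 := Real.sq_sqrt (by norm_num)
  have hx2 : x^2 < 2 := by nlinarith
  have key : 1 + x^2 < Real.sqrt (4*x^2+1) := by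
    rw [show (1:ℝ) + x^2 = Real.sqrt ((1+x^2)^2) from (Real.sqrt_sq (by positivity)).symm]
    apply Real.sqrt_lt_sqrt (by positivity)
    have hx0 : x ≠ 0 := ne_of_lt h2
    have hxx : 0 < x^2 := by positivity
    nlinarith [mul_lt_mul_of_pos_left hx2 hxx]
  simp only [lemnG]
  linarith

lemma hasDerivAt_h {x : ℝ} (hg : 0 < lemnG x) : HasDerivAt lemnH (lemnPhi x) x := by
  have := (Real.hasDerivAt_sqrt (ne_of_gt hg)).comp x (hasDerivAt_g x)
  refine this.congr_deriv ?_
  rw [lemnPhi, one_div, inv_mul_eq_div]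

-- derivative of G := 4x/s - 2x
lemma hasDerivAt_G (x : ℝ) : HasDerivAt (fun x => 4*x / Real.sqrt (4*x^2+1) - 2*x)
    (4 / (Real.sqrt (4*x^2+1))^3 - 2) x := by
  have hs0 : Real.sqrt (4*x^2+1) ≠ 0 := ne_of_gt (sqrt_pos' x)
  have h1 : HasDerivAt (fun x : ℝ => 4*x) 4 x := by
    simpa using (hasDerivAt_id x).const_mul 4
  have h2 := h1.div (hasDerivAt_s x) hs0
  have h3 : HasDerivAt (fun x : ℝ => 2*x) 2 x := by
    simpa using (hasDerivAt_id x).const_mul 2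
  have h4 := h2.sub h3
  refine h4.congr_deriv ?_
  have := sq_s x
  field_simp
  linear_combination 4 * this

lemma hasDerivAt_phi {x : ℝ} (hg : 0 < lemnG x) :
    HasDerivAt lemnPhi
      (((4 / (Real.sqrt (4*x^2+1))^3 - 2) * (2 * Real.sqrt (lemnG x)) -
        (4*x / Real.sqrt (4*x^2+1) - 2*x) *
          (2 * ((4*x / Real.sqrt (4*x^2+1) - 2*x) / (2 * Real.sqrt (lemnG x))))) /
        (2 * Real.sqrt (lemnG x))^2) x := by
  have ht : 0 < Real.sqrt (lemnG x) := Real.sqrt_pos.2 hg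
  have hden : HasDerivAt (fun x => 2 * Real.sqrt (lemnG x))
      (2 * ((4*x / Real.sqrt (4*x^2+1) - 2*x) / (2 * Real.sqrt (lemnG x)))) x := by
    have := ((Real.hasDerivAt_sqrt (ne_of_gt hg)).comp x (hasDerivAt_g x)).const_mul 2
    refine this.congr_deriv ?_
    rw [one_div]
    ring
  exact (hasDerivAt_G x).div hden (by positivity)

lemma phi_deriv_neg {x : ℝ} (hx : x ∈ Ioo (-Real.sqrt 2) 0) :
    ((4 / (Real.sqrt (4*x^2+1))^3 - 2) * (2 * Real.sqrt (lemnG x)) -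
        (4*x / Real.sqrt (4*x^2+1) - 2*x) *
          (2 * ((4*x / Real.sqrt (4*x^2+1) - 2*x) / (2 * Real.sqrt (lemnG x))))) /
        (2 * Real.sqrt (lemnG x))^2 < 0 := by
  have hg := g_pos hx
  set s := Real.sqrt (4*x^2+1) with hs
  set t := Real.sqrt (lemnG x) with htdef
  have hs0 : 0 < s := sqrt_pos' x
  have ht : 0 < t := Real.sqrt_pos.2 hg
  have ht2 : t^2 = lemnG x := Real.sq_sqrt (le_of_lt hg)
  have hs2 : s^2 = 4*x^2+1 := sq_s x
  have hgdef : lemnG x = s - 1 - x^2 := rfl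
  have hs1 : 1 < s := by
    rw [hs]
    have hx0 : x ≠ 0 := ne_of_lt hx.2
    have : (1:ℝ) = Real.sqrt 1 := (Real.sqrt_one).symm
    rw [this]
    apply Real.sqrt_lt_sqrt (by norm_num)
    have : 0 < x^2 := by positivity
    linarith
  apply div_neg_of_neg_of_pos _ (by positivity)
  -- numerator < 0
  have key : (4 / s^3 - 2) * (2*t) - (4*x/s - 2*x) * (2 * ((4*x/s - 2*x) / (2*t)))
      = (2 * (s - 1 - x^2) * (4/s^3 - 2) - (4*x/s - 2*x)^2) / t := by
    rw [← hgdef, ← ht2]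
    field_simp
  rw [key]
  apply div_neg_of_neg_of_pos _ ht
  -- core polynomial inequality
  have hmain : s^3 * (2 * (s - 1 - x^2) * (4/s^3 - 2) - (4*x/s - 2*x)^2) = -6*(s-1)^2 := by
    field_simp
    linear_combination (-4*s^2+4*s+2) * hs2
  have h6 : (0:ℝ) < 6*(s-1)^2 := by nlinarith
  have h3 : (0:ℝ) < s^3 := pow_pos hs0 3
  exact neg_of_mul_neg_left (by rw [mul_comm, hmain]; linarith) (le_of_lt h3)

lemma concaveOn_h : ConcaveOn ℝ (Ioo (-Real.sqrt 2) 0) lemnH := by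
  have hstrict : StrictConcaveOn ℝ (Ioo (-Real.sqrt 2) 0) lemnH := by
    apply strictConcaveOn_of_deriv2_neg (convex_Ioo _ _)
    · have hg : Continuous lemnG := by
        unfold lemnG
        fun_prop
      exact (Real.continuous_sqrt.comp hg).continuousOn
    · intro x hx
      rw [interior_Ioo] at hx
      have hev : deriv lemnH =ᶠ[nhds x] lemnPhi := by
        filter_upwards [isOpen_Ioo.mem_nhds hx] with y hy
        exact (hasDerivAt_h (g_pos hy)).deriv
      have h2 : deriv^[2] lemnH x = deriv lemnPhi x := by
        simp only [Function.iterate_succ, Function.iterate_zero, Function.comp_apply, id]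
        exact hev.deriv_eq
      rw [h2, (hasDerivAt_phi (g_pos hx)).deriv]
      exact phi_deriv_neg hx
  exact hstrict.concaveOn

lemma convex_K : Convex ℝ {p : ℝ × ℝ | p.1 ∈ Ioo (-Real.sqrt 2) 0 ∧ |p.2| < lemnH p.1} := by
  intro p hp q hq a b ha hb hab
  rcases eq_or_lt_of_le ha with h0 | h0
  · obtain rfl : b = 1 := by linarith
    simp only [← h0, zero_smul, one_smul, zero_add]
    exact hq
  · refine ⟨convex_Ioo _ _ hp.1 hq.1 ha hb hab, ?_⟩
    have key := concaveOn_h.2 hp.1 hq.1 ha hb hab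
    have h1 : |a * p.2 + b * q.2| ≤ a * |p.2| + b * |q.2| := by
      calc |a * p.2 + b * q.2| ≤ |a * p.2| + |b * q.2| := abs_add_le _ _
        _ = a * |p.2| + b * |q.2| := by
            rw [abs_mul, abs_mul, abs_of_nonneg ha, abs_of_nonneg hb]
    have h2 : a * |p.2| < a * lemnH p.1 := mul_lt_mul_of_pos_left hp.2 h0
    have h3 : b * |q.2| ≤ b * lemnH q.1 := mul_le_mul_of_nonneg_left (le_of_lt hq.2) hb
    have h4 : a * lemnH p.1 + b * lemnH q.1 ≤ lemnH (a * p.1 + b * q.1) := by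
      simpa [smul_eq_mul] using key
    show |a * p.2 + b * q.2| < lemnH (a * p.1 + b * q.1)
    linarith

lemma key_iff (x y : ℝ) : ((x^2+y^2)^2 < 2*(x^2 - y^2) ∧ x < 0) ↔
    (x ∈ Ioo (-Real.sqrt 2) 0 ∧ |y| < lemnH x) := by
  have hs2 : (Real.sqrt 2)^2 = 2 := Real.sq_sqrt (by norm_num)
  constructor
  · rintro ⟨h1, h2⟩
    have hx0 : x ≠ 0 := ne_of_lt h2
    have hxx : 0 < x^2 := by positivity
    have hx2 : x^2 < 2 := by nlinarith [sq_nonneg y, sq_nonneg (x^2+y^2)]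
    have hxm : x ∈ Ioo (-Real.sqrt 2) 0 := by
      refine ⟨?_, h2⟩
      have : |x| < Real.sqrt 2 := by
        rw [← Real.sqrt_sq_eq_abs]
        exact Real.sqrt_lt_sqrt (sq_nonneg x) (by nlinarith)
      exact (abs_lt.1 this).1
    refine ⟨hxm, ?_⟩
    have hgy : y^2 < lemnG x := by
      have hsq : (x^2+y^2+1)^2 < 4*x^2+1 := by nlinarith
      have : x^2+y^2+1 < Real.sqrt (4*x^2+1) := by
        rw [show x^2+y^2+1 = Real.sqrt ((x^2+y^2+1)^2) from
          (Real.sqrt_sq (by positivity)).symm]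
        exact Real.sqrt_lt_sqrt (by positivity) hsq
      simp only [lemnG]
      linarith
    rw [lemnH]
    rw [show |y| = Real.sqrt (y^2) from (Real.sqrt_sq_eq_abs y).symm]
    exact Real.sqrt_lt_sqrt (sq_nonneg y) hgy
  · rintro ⟨hxm, hy⟩
    refine ⟨?_, hxm.2⟩
    have hg := g_pos hxm
    have hgy : y^2 < lemnG x := by
      have := (Real.lt_sqrt (abs_nonneg y)).1 (by rwa [lemnH] at hy)
      rwa [sq_abs] at this
    have h5 : x^2+y^2+1 < Real.sqrt (4*x^2+1) := by
      simp only [lemnG] at hgy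
      linarith
    have h6 : (x^2+y^2+1)^2 < 4*x^2+1 := by
      have := (Real.lt_sqrt (by positivity : (0:ℝ) ≤ x^2+y^2+1)).1 h5
      linarith
    nlinarith

lemma abs_sq_sub_one_iff (u : ℂ) : ‖u^2 - 1‖ < 1 ↔
    (u.re^2+u.im^2)^2 < 2*(u.re^2 - u.im^2) := by
  have h0 : 0 ≤ ‖u^2-1‖ := norm_nonneg _
  have step : ‖u^2 - 1‖ < 1 ↔ (‖u^2-1‖)^2 < 1 := by
    constructor <;> intro h <;> nlinarith
  rw [step, Complex.sq_norm, Complex.normSq_apply]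
  simp only [pow_two, Complex.sub_re, Complex.sub_im, Complex.mul_re, Complex.mul_im,
    Complex.one_re, Complex.one_im]
  constructor <;> intro h <;> nlinarith [sq_nonneg (u.re*u.im)]

lemma convex_S1 : Convex ℝ {u : ℂ | ‖u^2 - 1‖ < 1 ∧ u.re < 0} := by
  have h := convex_K.linear_preimage Complex.equivRealProdLm.toLinearMap
  convert h using 1
  · rfl
  ext u
  simp only [Set.mem_setOf_eq, Set.mem_preimage, LinearEquiv.coe_coe,
    Complex.equivRealProdLm_apply]
  rw [abs_sq_sub_one_iff]
  constructor
  · rintro ⟨h1, h2⟩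
    exact (key_iff u.re u.im).1 ⟨h1, h2⟩
  · rintro ⟨h1, h2⟩
    have := (key_iff u.re u.im).2 ⟨h1, h2⟩
    exact ⟨this.1, this.2⟩

/-- The left lobe `D_β ∩ {Re z < β/2}` of the lemniscate region
`D_β = {|z² - βz| < β²/4}` is convex. -/
theorem left_lobe_convex (β : ℝ) (hβ : 0 < β) :
    Convex ℝ ({z : ℂ | ‖z ^ 2 - (β : ℂ) * z‖ < β ^ 2 / 4} ∩
      {z : ℂ | z.re < β / 2}) := by
  have hβ0 : (β:ℝ) ≠ 0 := ne_of_gt hβ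
  have memT : ∀ z : ℂ,
      z ∈ ({z : ℂ | ‖z ^ 2 - (β : ℂ) * z‖ < β ^ 2 / 4} ∩
        {z : ℂ | z.re < β / 2}) ↔
      (‖(((2/β : ℝ) : ℂ) * z - 1)^2 - 1‖ < 1 ∧
        (((2/β : ℝ) : ℂ) * z - 1).re < 0) := by
    intro z
    simp only [Set.mem_inter_iff, Set.mem_setOf_eq]
    have habs : (((2/β : ℝ) : ℂ) * z - 1)^2 - 1 = ((4/β^2 : ℝ):ℂ) * (z^2 - (β:ℂ)*z) := by
      have hβc : (β:ℂ) ≠ 0 := by exact_mod_cast hβ0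
      push_cast
      field_simp
      ring
    have hre : ((((2/β : ℝ) : ℂ) * z - 1).re) = (2/β) * z.re - 1 := by
      simp [Complex.sub_re, Complex.re_ofReal_mul]
    constructor
    · rintro ⟨h1, h2⟩
      refine ⟨?_, ?_⟩
      · rw [habs, norm_mul, Complex.norm_real, Real.norm_eq_abs, abs_of_pos (by positivity : (0:ℝ) < 4/β^2)]
        rw [div_mul_eq_mul_div, div_lt_one (by positivity)]
        rw [lt_div_iff₀ (by norm_num : (0:ℝ) < 4)] at h1
        nlinarith
      · rw [hre]
        have : 2 * z.re / β < 1 := by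
          rw [div_lt_one hβ]
          linarith
        rw [div_mul_eq_mul_div]
        linarith
    · rintro ⟨h1, h2⟩
      rw [habs, norm_mul, Complex.norm_real, Real.norm_eq_abs,
        abs_of_pos (by positivity : (0:ℝ) < 4/β^2)] at h1
      rw [div_mul_eq_mul_div, div_lt_one (by positivity)] at h1
      rw [hre, div_mul_eq_mul_div] at h2
      refine ⟨?_, ?_⟩
      · rw [lt_div_iff₀ (by norm_num : (0:ℝ) < 4)]
        nlinarith
      · have : 2 * z.re / β < 1 := by linarith
        rw [div_lt_one hβ] at this
        linarith
  intro z1 hz1 z2 hz2 a b ha hb hab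
  have h1 := (memT z1).1 hz1
  have h2 := (memT z2).1 hz2
  have hmem := convex_S1 h1 h2 ha hb hab
  apply (memT _).2
  have hab' : (a:ℂ) + (b:ℂ) = 1 := by exact_mod_cast hab
  have hcomb : ((2/β : ℝ) : ℂ) * (a • z1 + b • z2) - 1 =
      a • (((2/β : ℝ) : ℂ) * z1 - 1) + b • (((2/β : ℝ) : ℂ) * z2 - 1) := by
    simp only [Complex.real_smul]
    linear_combination hab'
  rw [hcomb]
  exact hmem
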